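/- Let τ = (1 + √5)/2. There exists t₀ ∈ (0.694, 0.695) such that 5t₀⁶ − 80t₀⁵ + 190t₀³ − 4t₀² − 84t₀ + 9 = 0, and such that at δ = arctan(√t₀) the two functions f_I(δ) = −4 sin²(2δ)/((cos 2δ − (4 + √5))·(cos 2δ − (1 − 2√5)τ³)) and h(δ) = 4 cos²(2δ)/(3 + cos²(2δ)) take the same value, which lies in the interval (0.0429, 0.04293). -/

import Mathlib

set_option maxHeartbeats 1000000


noncomputable section

open Real

/-- The golden ratio `τ = (1 + √5)/2`. -/
def τ : ℝ := (1 + Real.sqrt 5) / 2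

/-- The squared distance between two neighboring tangent lines in the δ-rotation
process for the icosahedron/dodecahedron pair. -/
def fI (δ : ℝ) : ℝ :=
  -4 * Real.sin (2 * δ) ^ 2 /
    ((Real.cos (2 * δ) - (4 + Real.sqrt 5)) *
      (Real.cos (2 * δ) - (1 - 2 * Real.sqrt 5) * τ ^ 3))

/-- The squared distance between the tangent lines of the orbit marked 3. -/
def h (δ : ℝ) : ℝ := 4 * Real.cos (2 * δ) ^ 2 / (3 + Real.cos (2 * δ) ^ 2)

theorem stmt16 :
    ∃ t₀ ∈ Set.Ioo (0.694 : ℝ) 0.695,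
      5 * t₀ ^ 6 - 80 * t₀ ^ 5 + 190 * t₀ ^ 3 - 4 * t₀ ^ 2 - 84 * t₀ + 9 = 0 ∧
      fI (Real.arctan (Real.sqrt t₀)) = h (Real.arctan (Real.sqrt t₀)) ∧
      fI (Real.arctan (Real.sqrt t₀)) ∈ Set.Ioo (0.0429 : ℝ) 0.04293 := by
  -- Step 1: find the root by IVT
  set P : ℝ → ℝ := fun t => 5 * t ^ 6 - 80 * t ^ 5 + 190 * t ^ 3 - 4 * t ^ 2 - 84 * t + 9 with hP
  have hcont : ContinuousOn P (Set.Icc (0.69435 : ℝ) 0.69436) := by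
    apply Continuous.continuousOn; fun_prop
  have hiv := intermediate_value_Ioo (by norm_num : (0.69435 : ℝ) ≤ 0.69436) hcont
  have h0mem : (0 : ℝ) ∈ Set.Ioo (P 0.69435) (P 0.69436) := by
    constructor
    · show 5 * (0.69435:ℝ) ^ 6 - 80 * 0.69435 ^ 5 + 190 * 0.69435 ^ 3 - 4 * 0.69435 ^ 2
        - 84 * 0.69435 + 9 < 0
      norm_num
    · show (0:ℝ) < 5 * (0.69436:ℝ) ^ 6 - 80 * 0.69436 ^ 5 + 190 * 0.69436 ^ 3
        - 4 * 0.69436 ^ 2 - 84 * 0.69436 + 9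
      norm_num
  obtain ⟨t₀, ht₀, hroot⟩ := hiv h0mem
  obtain ⟨hl, hu⟩ := ht₀
  have hp : 5 * t₀ ^ 6 - 80 * t₀ ^ 5 + 190 * t₀ ^ 3 - 4 * t₀ ^ 2 - 84 * t₀ + 9 = 0 := hroot
  have ht0pos : (0:ℝ) < t₀ := by linarith
  have h1t : (0:ℝ) < 1 + t₀ := by linarith
  -- sqrt 5 facts
  have h5 : Real.sqrt 5 ^ 2 = 5 := Real.sq_sqrt (by norm_num)
  have h5l : (2.236 : ℝ) < Real.sqrt 5 := by
    nlinarith [h5, Real.sqrt_nonneg 5]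
  have h5u : Real.sqrt 5 < (2.2361 : ℝ) := by
    nlinarith [h5, Real.sqrt_nonneg 5]
  -- trig values at δ = arctan √t₀
  set s : ℝ := Real.sqrt t₀ with hsdef
  set δ : ℝ := Real.arctan s with hδdef
  have hs2 : s ^ 2 = t₀ := Real.sq_sqrt ht0pos.le
  have hRsq : Real.sqrt (1 + s ^ 2) ^ 2 = 1 + t₀ := by
    rw [Real.sq_sqrt (by nlinarith [hs2] : (0:ℝ) ≤ 1 + s ^ 2), hs2]
  have hRne : Real.sqrt (1 + s ^ 2) ≠ 0 := by
    intro hc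
    rw [hc] at hRsq
    norm_num at hRsq
    linarith
  have hcos2 : Real.cos (2 * δ) = (1 - t₀) / (1 + t₀) := by
    rw [Real.cos_two_mul, hδdef, Real.cos_arctan]
    rw [div_pow, one_pow, hRsq]
    field_simp
    ring
  have hsin2sq : Real.sin (2 * δ) ^ 2 = 4 * t₀ / (1 + t₀) ^ 2 := by
    have h1 : Real.sin (2 * δ) ^ 2
        = 4 * (s ^ 2 / Real.sqrt (1 + s ^ 2) ^ 2) * (1 / Real.sqrt (1 + s ^ 2) ^ 2) := by
      rw [Real.sin_two_mul, hδdef, Real.sin_arctan, Real.cos_arctan]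
      field_simp
      ring
    rw [h1, hRsq, hs2]
    have hne : (1 + t₀) ≠ 0 := ne_of_gt h1t
    field_simp
  -- τ³ = 2 + √5, so (1 - 2√5)τ³ = -8 - 3√5
  have hB : (1 - 2 * Real.sqrt 5) * τ ^ 3 = -8 - 3 * Real.sqrt 5 := by
    show (1 - 2 * Real.sqrt 5) * ((1 + Real.sqrt 5) / 2) ^ 3 = -8 - 3 * Real.sqrt 5
    field_simp
    linear_combination (-(2:ℝ) * Real.sqrt 5 ^ 2 - 5 * Real.sqrt 5 - 13) * h5
  -- the key algebraic identity
  have ha2 : (168 - 16 * t₀ - 464 * t₀ ^ 2 - 80 * t₀ ^ 3 + 200 * t₀ ^ 4) ^ 2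
      - 5 * (72 + 16 * t₀ - 160 * t₀ ^ 2 - 16 * t₀ ^ 3 + 88 * t₀ ^ 4) ^ 2 = 0 := by
    linear_combination (256 * (1 + t₀) ^ 2) * hp
  have hfac : ((168 - 16 * t₀ - 464 * t₀ ^ 2 - 80 * t₀ ^ 3 + 200 * t₀ ^ 4)
      + Real.sqrt 5 * (72 + 16 * t₀ - 160 * t₀ ^ 2 - 16 * t₀ ^ 3 + 88 * t₀ ^ 4))
      * ((168 - 16 * t₀ - 464 * t₀ ^ 2 - 80 * t₀ ^ 3 + 200 * t₀ ^ 4)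
      - Real.sqrt 5 * (72 + 16 * t₀ - 160 * t₀ ^ 2 - 16 * t₀ ^ 3 + 88 * t₀ ^ 4)) = 0 := by
    linear_combination ha2 - (72 + 16 * t₀ - 160 * t₀ ^ 2 - 16 * t₀ ^ 3 + 88 * t₀ ^ 4) ^ 2 * h5
  have haneg : 168 - 16 * t₀ - 464 * t₀ ^ 2 - 80 * t₀ ^ 3 + 200 * t₀ ^ 4 < 0 := by
    nlinarith [sq_nonneg (t₀ - 0.6944), sq_nonneg t₀, mul_pos ht0pos ht0pos]
  have hbpos : (0:ℝ) < 72 + 16 * t₀ - 160 * t₀ ^ 2 - 16 * t₀ ^ 3 + 88 * t₀ ^ 4 := by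
    nlinarith [sq_nonneg (t₀ - 0.6944), sq_nonneg t₀, mul_pos ht0pos ht0pos]
  have hE : (168 - 16 * t₀ - 464 * t₀ ^ 2 - 80 * t₀ ^ 3 + 200 * t₀ ^ 4)
      + Real.sqrt 5 * (72 + 16 * t₀ - 160 * t₀ ^ 2 - 16 * t₀ ^ 3 + 88 * t₀ ^ 4) = 0 := by
    rcases mul_eq_zero.mp hfac with hE | hbad
    · exact hE
    · exfalso
      have hspos : (0:ℝ) < Real.sqrt 5 := by positivity
      have hprod := mul_pos hspos hbpos
      linarith
  -- cross-multiplied key identity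
  have key0 : (-(16 * t₀)) * (3 * (1 + t₀) ^ 2 + (1 - t₀) ^ 2)
      = 4 * (1 - t₀) ^ 2 * (((1 - t₀) - (4 + Real.sqrt 5) * (1 + t₀))
        * ((1 - t₀) + (8 + 3 * Real.sqrt 5) * (1 + t₀))) := by
    linear_combination hE + (12 * (1 - t₀) ^ 2 * (1 + t₀) ^ 2) * h5
  -- denominators
  have hc : Real.cos (2 * δ) = (1 - t₀) / (1 + t₀) := hcos2
  have hcb1 : (0.18038 : ℝ) < (1 - t₀) / (1 + t₀) := by
    rw [lt_div_iff₀ h1t]; linarith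
  have hcb2 : (1 - t₀) / (1 + t₀) < (0.18040 : ℝ) := by
    rw [div_lt_iff₀ h1t]; linarith
  have hden1 : ((1 - t₀) / (1 + t₀) - (4 + Real.sqrt 5))
      * ((1 - t₀) / (1 + t₀) - (-8 - 3 * Real.sqrt 5)) ≠ 0 := by
    have h1 : (1 - t₀) / (1 + t₀) - (4 + Real.sqrt 5) < 0 := by nlinarith
    have h2 : (0:ℝ) < (1 - t₀) / (1 + t₀) - (-8 - 3 * Real.sqrt 5) := by nlinarith
    exact ne_of_lt (mul_neg_of_neg_of_pos h1 h2)
  have hden2 : (3 : ℝ) + ((1 - t₀) / (1 + t₀)) ^ 2 ≠ 0 := by positivity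
  -- the equality fI = h
  have hfIh : fI δ = h δ := by
    unfold fI h
    rw [hB, hcos2, hsin2sq]
    rw [div_eq_div_iff hden1 hden2]
    have hne : (1 + t₀) ≠ 0 := ne_of_gt h1t
    field_simp
    linear_combination (1 / 4 : ℝ) * key0
  -- the value bounds
  have hval : h δ ∈ Set.Ioo (0.0429 : ℝ) 0.04293 := by
    unfold h
    rw [hcos2]
    constructor
    · rw [lt_div_iff₀ (by positivity)]
      nlinarith [hcb1, hcb2]
    · rw [div_lt_iff₀ (by positivity)]
      nlinarith [hcb1, hcb2]
  exact ⟨t₀, ⟨by linarith, by linarith⟩, hp, hfIh, hfIh ▸ hval⟩
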